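/- For the stochastic two-queue tandem system with communication blocking and intermediate buffer of capacity 0, suppose the sequences {τ_{i,n} : n = 1, 2, …}, i = 0, 1, 2, are mutually independent sequences of independent and identically distributed nonnegative random variables with finite means and finite variances. Then with probability one, lim_{n→∞} D_2(n)/n = max( E[τ_{0,1}], E[τ_{1,1}] + E[τ_{2,1}] ). -/

import Mathlib

open MeasureTheory ProbabilityTheory Finset Filter

/-- Arrival epochs: `arr τ n = arr τ (n-1) + τ 0 n`, `arr τ 0 = 0`. -/
noncomputable def arr (τ : ℕ → ℕ → ℝ) : ℕ → ℝ
  | 0 => 0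
  | n + 1 => arr τ n + τ 0 (n + 1)

/-- Departure epochs `(D_1(n), D_2(n))` of the two-queue tandem system with
communication blocking and intermediate buffer of capacity 0. -/
noncomputable def cb (τ : ℕ → ℕ → ℝ) : ℕ → ℝ × ℝ
  | 0 => (0, 0)
  | n + 1 =>
      let p := cb τ n
      let d1 := max (max (arr τ (n + 1)) p.1) p.2 + τ 1 (n + 1)
      (d1, max d1 p.2 + τ 2 (n + 1))

/-! ### Auxiliary definitions and deterministic lemmas -/

/-- Partial sums of the total service times `τ 1 + τ 2`. -/
noncomputable def Vsum (τ : ℕ → ℕ → ℝ) (n : ℕ) : ℝ :=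
  ∑ k ∈ Finset.range n, (τ 1 (k + 1) + τ 2 (k + 1))

/-- Running maximum appearing in the Lindley-type closed form for `(cb τ n).2`. -/
noncomputable def Mx (τ : ℕ → ℕ → ℝ) : ℕ → ℝ
  | 0 => 0
  | n + 1 => max (Mx τ n) (arr τ (n + 1) - Vsum τ n)

lemma arr_eq_sum (τ : ℕ → ℕ → ℝ) (n : ℕ) :
    arr τ n = ∑ k ∈ Finset.range n, τ 0 (k + 1) := by
  induction n with
  | zero => simp [arr]
  | succ n ih => rw [Finset.sum_range_succ, ← ih]; rfl

lemma cb_fst_le_snd (τ : ℕ → ℕ → ℝ) (h2 : ∀ n, 1 ≤ n → 0 ≤ τ 2 n) (n : ℕ) :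
    (cb τ n).1 ≤ (cb τ n).2 := by
  cases n with
  | zero => simp [cb]
  | succ n =>
      simp only [cb]
      have := h2 (n + 1) (by omega)
      have h := le_max_left (max (max (arr τ (n + 1)) (cb τ n).1) (cb τ n).2 + τ 1 (n + 1))
        (cb τ n).2
      linarith

lemma cb_snd_succ (τ : ℕ → ℕ → ℝ) (h1 : ∀ n, 1 ≤ n → 0 ≤ τ 1 n)
    (h2 : ∀ n, 1 ≤ n → 0 ≤ τ 2 n) (n : ℕ) :
    (cb τ (n + 1)).2 = max (arr τ (n + 1)) (cb τ n).2 + (τ 1 (n + 1) + τ 2 (n + 1)) := by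
  have hle := cb_fst_le_snd τ h2 n
  have h1n := h1 (n + 1) (by omega)
  have key : max (max (arr τ (n + 1)) (cb τ n).1) (cb τ n).2
      = max (arr τ (n + 1)) (cb τ n).2 := by
    rw [max_assoc, max_eq_right hle]
  have hd1 : (cb τ n).2 ≤ max (max (arr τ (n + 1)) (cb τ n).1) (cb τ n).2 + τ 1 (n + 1) := by
    have := le_max_right (max (arr τ (n + 1)) (cb τ n).1) (cb τ n).2
    linarith
  simp only [cb]
  rw [max_eq_left hd1, key]
  ring

lemma cb_snd_eq (τ : ℕ → ℕ → ℝ) (h1 : ∀ n, 1 ≤ n → 0 ≤ τ 1 n)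
    (h2 : ∀ n, 1 ≤ n → 0 ≤ τ 2 n) (n : ℕ) :
    (cb τ n).2 = Vsum τ n + Mx τ n := by
  induction n with
  | zero => simp [cb, Vsum, Mx]
  | succ n ih =>
      rw [cb_snd_succ τ h1 h2 n, ih]
      have hV : Vsum τ (n + 1) = Vsum τ n + (τ 1 (n + 1) + τ 2 (n + 1)) := by
        simp [Vsum, Finset.sum_range_succ]
      rw [show Mx τ (n + 1) = max (Mx τ n) (arr τ (n + 1) - Vsum τ n) from rfl, hV]
      rcases le_total (arr τ (n + 1)) (Vsum τ n + Mx τ n) with h | h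
      · rw [max_eq_right h, max_eq_left (by linarith)]; ring
      · rw [max_eq_left h, max_eq_right (by linarith)]; ring

/-- Deterministic running-maximum lemma: if `X k / k → c` and `M` is the running maximum
of the `X k` starting from `0`, then `M n / n → max c 0`. -/
lemma runmax {X : ℕ → ℝ} {c : ℝ} (hX : Tendsto (fun k : ℕ => X k / k) atTop (nhds c))
    {M : ℕ → ℝ} (hM0 : M 0 = 0) (hMs : ∀ n, M (n + 1) = max (M n) (X n)) :
    Tendsto (fun n : ℕ => M n / n) atTop (nhds (max c 0)) := by
  set c' := max c 0 with hc'
  have hc0 : (0 : ℝ) ≤ c' := le_max_right _ _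
  have hMmono : Monotone M := by
    apply monotone_nat_of_le_succ
    intro n; rw [hMs n]; exact le_max_left _ _
  have hMnonneg : ∀ n, 0 ≤ M n := fun n => hM0 ▸ hMmono (Nat.zero_le n)
  have hXleM : ∀ n, X n ≤ M (n + 1) := fun n => (hMs n) ▸ le_max_right _ _
  have hratio : Tendsto (fun n : ℕ => (n : ℝ) / (n + 1)) atTop (nhds 1) :=
    tendsto_natCast_div_add_atTop (1 : ℝ)
  have hX1 : Tendsto (fun n : ℕ => X n / (n + 1 : ℕ)) atTop (nhds c) := by
    have h := hX.mul hratio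
    rw [mul_one] at h
    apply h.congr'
    filter_upwards [eventually_ge_atTop 1] with n hn
    have hn0 : (n : ℝ) ≠ 0 := Nat.cast_ne_zero.mpr (by omega)
    push_cast
    field_simp
  have hL : Tendsto (fun n : ℕ => max (X n / (n + 1 : ℕ)) 0) atTop (nhds c') :=
    hX1.max tendsto_const_nhds
  have hlow : ∀ n : ℕ, max (X n / (n + 1 : ℕ)) 0 ≤ M (n + 1) / (n + 1 : ℕ) := by
    intro n
    have hp : (0 : ℝ) < (n + 1 : ℕ) := by positivity
    apply max_le
    · gcongr
      exact hXleM n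
    · exact div_nonneg (hMnonneg _) hp.le
  rw [← tendsto_add_atTop_iff_nat 1]
  rw [Metric.tendsto_atTop]
  intro ε hε
  obtain ⟨N₁, hN₁⟩ := (Metric.tendsto_atTop.mp hL) ε hε
  obtain ⟨N₂', hN₂'⟩ := (Metric.tendsto_atTop.mp hX) (ε / 2) (by linarith)
  set N₂ := max N₂' 1 with hN₂def
  have hXub : ∀ k, N₂ ≤ k → X k ≤ (c' + ε / 2) * k := by
    intro k hk
    have hk1 : 1 ≤ k := le_trans (le_max_right _ _) hk
    have hkpos : (0 : ℝ) < k := by exact_mod_cast hk1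
    have := hN₂' k (le_trans (le_max_left _ _) hk)
    rw [Real.dist_eq, abs_lt] at this
    have h1 : X k / k < c + ε / 2 := by linarith [this.2]
    have h2 : X k < (c + ε / 2) * k := by
      rw [div_lt_iff₀ hkpos] at h1; exact h1
    have : c + ε / 2 ≤ c' + ε / 2 := by
      have := le_max_left c 0; linarith
    nlinarith
  have hMub : ∀ n, N₂ ≤ n → M n ≤ max (M N₂) ((c' + ε / 2) * n) := by
    intro n hn
    induction n, hn using Nat.le_induction with
    | base => exact le_max_left _ _
    | succ n hn ih =>
        rw [hMs n]
        apply max_le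
        · exact ih.trans (max_le_max le_rfl
            (by push_cast; nlinarith [Nat.cast_nonneg (α := ℝ) n]))
        · exact le_trans (hXub n hn) (le_trans
            (by push_cast; nlinarith [Nat.cast_nonneg (α := ℝ) n]) (le_max_right _ _))
  obtain ⟨N₃, hN₃⟩ := exists_nat_gt (M N₂ * (2 / ε))
  refine ⟨max N₁ (max N₂ N₃), fun n hn => ?_⟩
  have hn1 : N₁ ≤ n := le_trans (le_max_left _ _) hn
  have hn2 : N₂ ≤ n := le_trans (le_trans (le_max_left _ _) (le_max_right _ _)) hn
  have hn3 : N₃ ≤ n := le_trans (le_trans (le_max_right _ _) (le_max_right _ _)) hn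
  have hp : (0 : ℝ) < (n + 1 : ℕ) := by positivity
  rw [Real.dist_eq, abs_lt]
  constructor
  · have := hN₁ n hn1
    rw [Real.dist_eq, abs_lt] at this
    have := this.1
    have hl := hlow n
    linarith
  · have hub : M (n + 1) ≤ max (M N₂) ((c' + ε / 2) * ((n : ℝ) + 1)) := by
      have h := hMub (n + 1) (by omega)
      push_cast at h
      exact h
    have hN3n : (N₃ : ℝ) ≤ n := by exact_mod_cast hn3
    have h2 : M N₂ * (2 / ε) < (n : ℝ) + 1 := by linarith [hN₃]
    have hMN2 : M N₂ < ε / 2 * ((n : ℝ) + 1) := by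
      have heq : M N₂ = M N₂ * (2 / ε) * (ε / 2) := by field_simp
      rw [heq]
      calc M N₂ * (2 / ε) * (ε / 2) < ((n : ℝ) + 1) * (ε / 2) :=
            mul_lt_mul_of_pos_right h2 (by linarith)
        _ = ε / 2 * ((n : ℝ) + 1) := by ring
    have hnn : (0 : ℝ) ≤ (n : ℝ) := Nat.cast_nonneg n
    have hfin : M (n + 1) < (c' + ε) * ((n : ℝ) + 1) :=
      lt_of_le_of_lt hub (max_lt (by nlinarith) (by nlinarith))
    rw [sub_lt_iff_lt_add, div_lt_iff₀ hp]
    push_cast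
    nlinarith

/-- Deterministic limit theorem for the departure epochs. -/
lemma cb_limit (τ : ℕ → ℕ → ℝ) (h1 : ∀ n, 1 ≤ n → 0 ≤ τ 1 n) (h2 : ∀ n, 1 ≤ n → 0 ≤ τ 2 n)
    {α β : ℝ} (ha : Tendsto (fun n : ℕ => arr τ n / n) atTop (nhds α))
    (hb : Tendsto (fun n : ℕ => Vsum τ n / n) atTop (nhds β)) :
    Tendsto (fun n : ℕ => (cb τ n).2 / n) atTop (nhds (max α β)) := by
  have hX : Tendsto (fun k : ℕ => (arr τ (k + 1) - Vsum τ k) / k) atTop (nhds (α - β)) := by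
    have h1' : Tendsto (fun k : ℕ => arr τ (k + 1) / k) atTop (nhds α) := by
      have hshift : Tendsto (fun k : ℕ => arr τ (k + 1) / (k + 1 : ℕ)) atTop (nhds α) :=
        ha.comp (tendsto_add_atTop_nat 1)
      have hratio : Tendsto (fun k : ℕ => ((k : ℝ) + 1) / k) atTop (nhds 1) := by
        have h0 : Tendsto (fun n : ℕ => 1 / (n : ℝ)) atTop (nhds 0) := tendsto_one_div_atTop_nhds_zero_nat
        have h := (tendsto_const_nhds (x := (1 : ℝ)) (f := atTop (α := ℕ))).add h0
        rw [add_zero] at h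
        apply h.congr'
        filter_upwards [eventually_ge_atTop 1] with n hn
        have hne : (n : ℝ) ≠ 0 := Nat.cast_ne_zero.mpr (by omega)
        field_simp
      have h := hshift.mul hratio
      rw [mul_one] at h
      apply h.congr'
      filter_upwards [eventually_ge_atTop 1] with n hn
      have hne : (n : ℝ) ≠ 0 := Nat.cast_ne_zero.mpr (by omega)
      push_cast
      field_simp
    exact (h1'.sub hb).congr (fun k => (sub_div _ _ _).symm)
  have hM : Tendsto (fun n : ℕ => Mx τ n / n) atTop (nhds (max (α - β) 0)) :=
    runmax hX rfl (fun n => rfl)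
  have hsum := hb.add hM
  have heq : β + max (α - β) 0 = max α β := by
    rcases le_total α β with h | h
    · rw [max_eq_right (by linarith : α - β ≤ 0), max_eq_right h, add_zero]
    · rw [max_eq_left (by linarith : (0 : ℝ) ≤ α - β), max_eq_left h]; ring
  rw [heq] at hsum
  apply hsum.congr
  intro n
  rw [cb_snd_eq τ h1 h2 n, add_div]

/-- **Mean cycle time under communication blocking.** If the interarrival and
service times `τ i n`, `i = 0, 1, 2`, form mutually independent sequences of
i.i.d. nonnegative random variables with finite means and finite variances,
then with probability one
`D_2(n)/n → max (E[τ 0 1]) (E[τ 1 1] + E[τ 2 1])`. -/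
theorem mean_cycle_time_communication_blocking
    {Ω : Type*} [MeasurableSpace Ω] (μ : Measure Ω) [IsProbabilityMeasure μ]
    (τ : ℕ → ℕ → Ω → ℝ)
    (hpos : ∀ i ≤ 2, ∀ n, 1 ≤ n → ∀ ω, 0 ≤ τ i n ω)
    (hmeas : ∀ i ≤ 2, ∀ n, Measurable (τ i n))
    (hindep : iIndepFun
        (fun p : Fin 3 × ℕ => τ (p.1 : ℕ) (p.2 + 1)) μ)
    (hident : ∀ i ≤ 2, ∀ n, 1 ≤ n → IdentDistrib (τ i n) (τ i 1) μ μ)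
    (hint : ∀ i ≤ 2, Integrable (τ i 1) μ)
    (hvar : ∀ i ≤ 2, MemLp (τ i 1) 2 μ) :
    ∀ᵐ ω ∂μ, Tendsto (fun n : ℕ => (cb (fun i j => τ i j ω) n).2 / n) atTop
      (nhds (max (∫ ω, τ 0 1 ω ∂μ) ((∫ ω, τ 1 1 ω ∂μ) + ∫ ω, τ 2 1 ω ∂μ))) := by
  have slln : ∀ i, i ≤ 2 → ∀ᵐ ω ∂μ, Tendsto
      (fun n : ℕ => (∑ k ∈ Finset.range n, τ i (k + 1) ω) / n) atTop
      (nhds (∫ ω, τ i 1 ω ∂μ)) := by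
    intro i hi
    exact strong_law_ae_real (μ := μ) (fun k ω => τ i (k + 1) ω) (hint i hi)
      (fun k l hkl => hindep.indepFun
        (i := (⟨i, by omega⟩, k)) (j := (⟨i, by omega⟩, l))
        (by simp [Prod.ext_iff, hkl]))
      (fun k => hident i hi (k + 1) (by omega))
  filter_upwards [slln 0 (by norm_num), slln 1 (by norm_num), slln 2 (by norm_num)]
    with ω h0 h1 h2
  have harr : Tendsto (fun n : ℕ => arr (fun i j => τ i j ω) n / n) atTop
      (nhds (∫ ω, τ 0 1 ω ∂μ)) := by
    apply h0.congr
    intro n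
    rw [arr_eq_sum]
  have hV : Tendsto (fun n : ℕ => Vsum (fun i j => τ i j ω) n / n) atTop
      (nhds ((∫ ω, τ 1 1 ω ∂μ) + ∫ ω, τ 2 1 ω ∂μ)) := by
    apply (h1.add h2).congr
    intro n
    simp only [Vsum, Finset.sum_add_distrib, add_div]
  exact cb_limit (fun i j => τ i j ω)
    (fun n hn => hpos 1 (by norm_num) n hn ω)
    (fun n hn => hpos 2 (by norm_num) n hn ω) harr hV
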